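/- Let z ∈ ℂ with z ∉ (−∞,0] ∪ [1,∞), let τ := 2*π*Complex.I, and let M be the 3×3 complex matrix !![1, Complex.log (1−z), −Li₂(z); 0, τ, τ * Complex.log z; 0, 0, τ^2] (the period matrix of the second polylogarithm Hodge–Tate structure 𝒫⁽²⁾(z)). Then the skew-symmetric period of M, namely the image of Σ_{k : Fin 3} (M⁻¹) 0 k ⊗ₜ[ℚ] (τ^{−2} * (M k 2)) under the map ℂ ⊗[ℚ] ℂ → Λ²_ℚ ℂ, x ⊗ₜ y ↦ x ∧ y, equals the Bloch regulator ρ̃(z) := (Complex.log z / τ) ∧ (Complex.log (1−z) / τ) + 1 ∧ (D(z)/τ^2). -/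

import Mathlib

open scoped TensorProduct

noncomputable section

/-- The wedge product `x ∧ y` of two complex numbers, as an element of the second
exterior power `⋀[ℚ]^2 ℂ` of `ℂ` as a `ℚ`-vector space. -/
def wedge (x y : ℂ) : ⋀[ℚ]^2 ℂ :=
  ⟨ExteriorAlgebra.ιMulti ℚ 2 ![x, y],
    ExteriorAlgebra.ιMulti_range ℚ 2 ⟨![x, y], rfl⟩⟩

lemma update_zero (x y z : ℂ) : Function.update ![x, y] 0 z = ![z, y] := by
  ext i; fin_cases i <;> simp

lemma update_one (x y z : ℂ) : Function.update ![x, y] 1 z = ![x, z] := by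
  ext i; fin_cases i <;> simp

/-- The wedge product as a `ℚ`-bilinear map. -/
def wedgeBil : ℂ →ₗ[ℚ] ℂ →ₗ[ℚ] ⋀[ℚ]^2 ℂ :=
  LinearMap.mk₂ ℚ wedge
    (fun x x' y => by
      have h := (ExteriorAlgebra.ιMulti ℚ 2 (M := ℂ)).map_update_add ![x, y] 0 x x'
      apply Subtype.ext
      simpa [wedge, update_zero] using h)
    (fun q x y => by
      have h := (ExteriorAlgebra.ιMulti ℚ 2 (M := ℂ)).map_update_smul ![x, y] 0 q x
      apply Subtype.ext
      simpa [wedge, update_zero] using h)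
    (fun x y y' => by
      have h := (ExteriorAlgebra.ιMulti ℚ 2 (M := ℂ)).map_update_add ![x, y] 1 y y'
      apply Subtype.ext
      simpa [wedge, update_one] using h)
    (fun q x y => by
      have h := (ExteriorAlgebra.ιMulti ℚ 2 (M := ℂ)).map_update_smul ![x, y] 1 q y
      apply Subtype.ext
      simpa [wedge, update_one] using h)

/-- The `ℚ`-linear map `ℂ ⊗[ℚ] ℂ → ⋀[ℚ]^2 ℂ` sending `x ⊗ₜ y` to `x ∧ y`. -/
def wedgeTensor : ℂ ⊗[ℚ] ℂ →ₗ[ℚ] ⋀[ℚ]^2 ℂ :=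
  TensorProduct.lift wedgeBil

/-- The dilogarithm `Li₂(z)`, defined for `z ∉ (−∞,0] ∪ [1,∞)` as the integral of
`−log(1−t)/t` along the segment from `0` to `z`. -/
def Li2 (z : ℂ) : ℂ := -∫ u in (0:ℝ)..1, Complex.log (1 - (u : ℂ) * z) / (u : ℂ)

/-- The integral of `log(1−t)/t + log t/(1−t)` along the segment from `0` to `z`. -/
def Dfun (z : ℂ) : ℂ :=
  ∫ u in (0:ℝ)..1,
    (Complex.log (1 - (u : ℂ) * z) / (u : ℂ) +
      z * Complex.log ((u : ℂ) * z) / (1 - (u : ℂ) * z))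



open MeasureTheory intervalIntegral Set Filter Topology

lemma cases_of_hz {z : ℂ} (hz : z ∉ Complex.ofReal '' (Set.Iic 0 ∪ Set.Ici 1)) :
    z.im ≠ 0 ∨ (0 < z.re ∧ z.re < 1) := by
  by_cases him : z.im = 0
  · right
    have hreal : z = (z.re : ℂ) := Complex.ext (by simp) (by simp [him])
    constructor
    · by_contra h; push_neg at h
      exact hz ⟨z.re, Or.inl h, hreal.symm⟩
    · by_contra h; push_neg at h
      exact hz ⟨z.re, Or.inr h, hreal.symm⟩
  · exact Or.inl him

lemma zne {z : ℂ} (hc : z.im ≠ 0 ∨ (0 < z.re ∧ z.re < 1)) : z ≠ 0 := by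
  rcases hc with h | ⟨h, _⟩ <;> intro h0 <;> rw [h0] at h <;> simp at h

lemma mem_slit1 {z : ℂ} (hc : z.im ≠ 0 ∨ (0 < z.re ∧ z.re < 1)) {u : ℝ} (hu : 0 < u) :
    (u : ℂ) * z ∈ Complex.slitPlane := by
  rw [Complex.mem_slitPlane_iff]
  rcases hc with him | ⟨h0, _⟩
  · right
    simp only [Complex.mul_im, Complex.ofReal_re, Complex.ofReal_im, zero_mul, add_zero]
    exact mul_ne_zero (ne_of_gt hu) him
  · left
    simp only [Complex.mul_re, Complex.ofReal_re, Complex.ofReal_im, zero_mul, sub_zero]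
    positivity

lemma mem_slit2 {z : ℂ} (hc : z.im ≠ 0 ∨ (0 < z.re ∧ z.re < 1)) {u : ℝ}
    (hu0 : 0 ≤ u) (hu1 : u ≤ 1) : 1 - (u : ℂ) * z ∈ Complex.slitPlane := by
  rw [Complex.mem_slitPlane_iff]
  rcases hc with him | ⟨h0, h1⟩
  · rcases eq_or_lt_of_le hu0 with h | h
    · left; simp [← h]
    · right
      simp only [Complex.sub_im, Complex.one_im, Complex.mul_im, Complex.ofReal_re,
        Complex.ofReal_im, zero_mul, add_zero, zero_sub, neg_ne_zero]
      exact mul_ne_zero (ne_of_gt h) him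
  · left
    simp only [Complex.sub_re, Complex.one_re, Complex.mul_re, Complex.ofReal_re,
      Complex.ofReal_im, zero_mul, sub_zero]
    have : u * z.re ≤ 1 * z.re := by
      apply mul_le_mul_of_nonneg_right hu1 h0.le
    nlinarith

lemma hne {z : ℂ} (hc : z.im ≠ 0 ∨ (0 < z.re ∧ z.re < 1)) {u : ℝ}
    (hu0 : 0 ≤ u) (hu1 : u ≤ 1) : 1 - (u : ℂ) * z ≠ 0 :=
  Complex.slitPlane_ne_zero (mem_slit2 hc hu0 hu1)

lemma Dfun_eq {z : ℂ} (hz : z ∉ Complex.ofReal '' (Set.Iic 0 ∪ Set.Ici 1)) :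
    Dfun z = -2 * Li2 z - Complex.log z * Complex.log (1 - z) := by
  have hc := cases_of_hz hz
  have hz0 : z ≠ 0 := zne hc
  -- derivative of log(1 - u z) at 0
  have hD0 : HasDerivAt (fun u : ℝ => Complex.log (1 - (u : ℂ) * z)) (-z) 0 := by
    have h1 : HasDerivAt (fun u : ℝ => 1 - (u : ℂ) * z) (-z) 0 := by
      simpa using ((Complex.ofRealCLM.hasDerivAt.mul_const z).const_sub 1)
    have h2 := (Complex.hasDerivAt_log (by simpa using mem_slit2 hc le_rfl zero_le_one)).comp
      (0 : ℝ) h1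
    rw [Function.comp_def] at h2
    simpa using h2
  -- limit of log(1-uz)/u at 0+
  have t2 : Tendsto (fun u : ℝ => Complex.log (1 - (u : ℂ) * z) / (u : ℂ)) (𝓝[>] (0:ℝ))
      (𝓝 (-z)) := by
    have h := hasDerivAt_iff_tendsto_slope.mp hD0
    have h' := h.mono_left (nhdsWithin_mono 0 (fun x (hx : x ∈ Ioi 0) =>
      (mem_compl_singleton_iff.mpr (ne_of_gt hx))))
    refine h'.congr' ?_
    filter_upwards [self_mem_nhdsWithin] with u hu
    rw [slope_def_module]
    simp only [sub_zero, Complex.ofReal_zero, zero_mul, sub_zero, Complex.log_one]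
    rw [Complex.real_smul]
    push_cast
    field_simp
  -- interval integrability of log(1-uz)/u
  have hI_f : IntervalIntegrable (fun u : ℝ => Complex.log (1 - (u : ℂ) * z) / (u : ℂ))
      volume 0 1 := by
    have hF : ContinuousOn
        (Function.update (fun u : ℝ => Complex.log (1 - (u : ℂ) * z) / (u : ℂ)) 0 (-z))
        (Icc 0 1) := by
      rw [continuousOn_update_iff]
      constructor
      · intro u hu
        have hu0 : u ≠ 0 := hu.2
        have hu' : u ∈ Icc (0:ℝ) 1 := hu.1
        apply ContinuousAt.continuousWithinAt
        refine ContinuousAt.div ?_ Complex.continuous_ofReal.continuousAt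
          (Complex.ofReal_ne_zero.mpr hu0)
        exact ContinuousAt.comp (x := u) (g := Complex.log)
          (f := fun u : ℝ => 1 - (u : ℂ) * z)
          (continuousAt_clog (mem_slit2 hc hu'.1 hu'.2))
          ((continuous_const.sub (Complex.continuous_ofReal.mul continuous_const)).continuousAt)
      · intro _
        refine t2.mono_left (nhdsWithin_mono _ ?_)
        rintro x ⟨⟨hx0, _⟩, hx⟩
        exact lt_of_le_of_ne hx0 (Ne.symm hx)
    have hF' : ContinuousOn
        (Function.update (fun u : ℝ => Complex.log (1 - (u : ℂ) * z) / (u : ℂ)) 0 (-z))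
        (uIcc (0:ℝ) 1) := by rwa [uIcc_of_le zero_le_one]
    have h1 : IntervalIntegrable
        (Function.update (fun u : ℝ => Complex.log (1 - (u : ℂ) * z) / (u : ℂ)) 0 (-z))
        volume 0 1 := hF'.intervalIntegrable
    rw [intervalIntegrable_iff_integrableOn_Ioc_of_le zero_le_one] at h1 ⊢
    exact h1.congr_fun (fun u hu => by
      rw [Function.update_of_ne (ne_of_gt hu.1)]) measurableSet_Ioc
  -- integrability of real log
  have hlogR : IntervalIntegrable Real.log volume 0 1 := by
    have hg : IntervalIntegrable (fun x : ℝ => 2 * x ^ (-(1/2) : ℝ)) volume 0 1 :=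
      (intervalIntegrable_rpow' (by norm_num)).const_mul 2
    refine hg.mono_fun Real.measurable_log.aestronglyMeasurable ?_
    filter_upwards [ae_restrict_mem measurableSet_uIoc] with x hx
    rw [uIoc_of_le zero_le_one] at hx
    obtain ⟨hx0, hx1⟩ := hx
    have hpow : (0:ℝ) < x ^ (-(1/2) : ℝ) := Real.rpow_pos_of_pos hx0 _
    have hlog : Real.log (x ^ (-(1/2) : ℝ)) = -(1/2) * Real.log x := Real.log_rpow hx0 _
    have hb : -Real.log x ≤ 2 * x ^ (-(1/2) : ℝ) := by
      have h2 := Real.log_le_sub_one_of_pos hpow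
      rw [hlog] at h2
      nlinarith
    have hnn : Real.log x ≤ 0 := Real.log_nonpos hx0.le hx1
    simp only [Real.norm_eq_abs]
    rw [abs_of_nonpos hnn, abs_of_pos (by positivity)]
    exact hb
  have hlogC : IntervalIntegrable (fun u : ℝ => (Real.log u : ℂ)) volume 0 1 :=
    ⟨Complex.ofRealCLM.integrable_comp hlogR.1, Complex.ofRealCLM.integrable_comp hlogR.2⟩
  -- integrability of z log(uz)/(1-uz)
  have hI_q : IntervalIntegrable
      (fun u : ℝ => z * Complex.log ((u : ℂ) * z) / (1 - (u : ℂ) * z)) volume 0 1 := by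
    have hc1 : ContinuousOn (fun u : ℝ => z / (1 - (u : ℂ) * z)) (uIcc (0:ℝ) 1) := by
      rw [uIcc_of_le zero_le_one]
      exact continuousOn_const.div
        ((continuous_const.sub (Complex.continuous_ofReal.mul continuous_const)).continuousOn)
        (fun u hu => hne hc hu.1 hu.2)
    have hQ := ((hlogC.add intervalIntegrable_const).mul_continuousOn hc1 :
      IntervalIntegrable (fun u : ℝ =>
        ((Real.log u : ℂ) + Complex.log z) * (z / (1 - (u : ℂ) * z))) volume 0 1)
    rw [intervalIntegrable_iff_integrableOn_Ioc_of_le zero_le_one] at hQ ⊢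
    refine hQ.congr_fun (fun u hu => ?_) measurableSet_Ioc
    have h1 : 1 - (u:ℂ)*z ≠ 0 := hne hc hu.1.le hu.2
    rw [Complex.log_ofReal_mul hu.1 hz0]
    ring
  -- derivative of the product on (0,1)
  have hderiv : ∀ u ∈ Ioo (0:ℝ) 1,
      HasDerivAt (fun u : ℝ => Complex.log ((u : ℂ) * z) * Complex.log (1 - (u : ℂ) * z))
        (Complex.log (1 - (u : ℂ) * z) / (u : ℂ) -
          z * Complex.log ((u : ℂ) * z) / (1 - (u : ℂ) * z)) u := by
    intro u hu
    have hu0 : (u : ℂ) ≠ 0 := Complex.ofReal_ne_zero.mpr (ne_of_gt hu.1)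
    have hne' : 1 - (u : ℂ) * z ≠ 0 := hne hc hu.1.le hu.2.le
    have h1 : HasDerivAt (fun u : ℝ => (u : ℂ) * z) z u := by
      simpa using (Complex.ofRealCLM.hasDerivAt.mul_const z)
    have h2 : HasDerivAt (fun u : ℝ => Complex.log ((u : ℂ) * z)) (((u : ℂ) * z)⁻¹ * z) u := by
      have := (Complex.hasDerivAt_log (mem_slit1 hc hu.1)).comp u h1
      rwa [Function.comp_def] at this
    have h3 : HasDerivAt (fun u : ℝ => 1 - (u : ℂ) * z) (-z) u := by
      simpa using h1.const_sub 1
    have h4 : HasDerivAt (fun u : ℝ => Complex.log (1 - (u : ℂ) * z))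
        ((1 - (u : ℂ) * z)⁻¹ * -z) u := by
      have := (Complex.hasDerivAt_log (mem_slit2 hc hu.1.le hu.2.le)).comp u h3
      rwa [Function.comp_def] at this
    have := h2.mul h4
    refine this.congr_deriv ?_
    rw [mul_inv, mul_assoc (u:ℂ)⁻¹, inv_mul_cancel₀ hz0]
    ring
  -- limit at 0+
  have T_a : Tendsto (fun u : ℝ => Complex.log (1 - (u : ℂ) * z)) (𝓝[>] (0:ℝ)) (𝓝 0) := by
    have hca : ContinuousAt (fun u : ℝ => Complex.log (1 - (u : ℂ) * z)) 0 := by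
      apply ContinuousAt.comp (x := (0:ℝ))
        (g := Complex.log) (f := fun u : ℝ => 1 - (u : ℂ) * z)
      · exact continuousAt_clog (by simpa using mem_slit2 hc le_rfl zero_le_one)
      · exact (continuous_const.sub (Complex.continuous_ofReal.mul continuous_const)).continuousAt
    have h0 := hca.tendsto.mono_left (nhdsWithin_le_nhds (s := Ioi (0:ℝ)))
    simpa using h0
  have t1 : Tendsto (fun u : ℝ => ((Real.log u * u : ℝ) : ℂ)) (𝓝[>] (0:ℝ)) (𝓝 0) := by
    have h := tendsto_log_mul_rpow_nhdsGT_zero (one_pos)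
    simp only [Real.rpow_one] at h
    have := (Complex.continuous_ofReal.tendsto 0).comp h
    simpa [Function.comp_def] using this
  have T_b : Tendsto (fun u : ℝ => (Real.log u : ℂ) * Complex.log (1 - (u : ℂ) * z))
      (𝓝[>] (0:ℝ)) (𝓝 0) := by
    have h := t1.mul t2
    rw [zero_mul] at h
    refine Tendsto.congr' ?_ h
    filter_upwards [self_mem_nhdsWithin] with u hu
    have hu0 : (u : ℂ) ≠ 0 := Complex.ofReal_ne_zero.mpr (ne_of_gt hu)
    push_cast
    field_simp
  have ha : Tendsto (fun u : ℝ => Complex.log ((u : ℂ) * z) * Complex.log (1 - (u : ℂ) * z))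
      (𝓝[>] (0:ℝ)) (𝓝 0) := by
    have h := T_b.add (T_a.const_mul (Complex.log z))
    rw [mul_zero, add_zero] at h
    refine Tendsto.congr' ?_ h
    filter_upwards [self_mem_nhdsWithin] with u hu
    rw [Complex.log_ofReal_mul hu hz0]
    ring
  -- limit at 1-
  have hb : Tendsto (fun u : ℝ => Complex.log ((u : ℂ) * z) * Complex.log (1 - (u : ℂ) * z))
      (𝓝[<] (1:ℝ)) (𝓝 (Complex.log z * Complex.log (1 - z))) := by
    have c1 : ContinuousAt (fun u : ℝ => Complex.log ((u : ℂ) * z)) 1 := by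
      apply ContinuousAt.comp (x := (1:ℝ)) (g := Complex.log) (f := fun u : ℝ => (u : ℂ) * z)
      · exact continuousAt_clog (mem_slit1 hc one_pos)
      · exact (Complex.continuous_ofReal.mul continuous_const).continuousAt
    have c2 : ContinuousAt (fun u : ℝ => Complex.log (1 - (u : ℂ) * z)) 1 := by
      apply ContinuousAt.comp (x := (1:ℝ)) (g := Complex.log)
        (f := fun u : ℝ => 1 - (u : ℂ) * z)
      · exact continuousAt_clog (mem_slit2 hc zero_le_one le_rfl)
      · exact (continuous_const.sub (Complex.continuous_ofReal.mul continuous_const)).continuousAt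
    have h0 := (c1.mul c2).tendsto.mono_left (nhdsWithin_le_nhds (s := Iio (1:ℝ)))
    convert h0 using 2
    all_goals simp
  have hFTC := integral_eq_sub_of_hasDerivAt_of_tendsto zero_lt_one hderiv (hI_f.sub hI_q) ha hb
  rw [sub_zero] at hFTC
  -- assemble
  have e1 : ∀ u : ℝ,
      Complex.log (1 - (u : ℂ) * z) / (u : ℂ) +
        z * Complex.log ((u : ℂ) * z) / (1 - (u : ℂ) * z)
      = 2 * (Complex.log (1 - (u : ℂ) * z) / (u : ℂ)) -
        (Complex.log (1 - (u : ℂ) * z) / (u : ℂ) -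
          z * Complex.log ((u : ℂ) * z) / (1 - (u : ℂ) * z)) := fun u => by ring
  have hint : (∫ u in (0:ℝ)..1, Complex.log (1 - (u : ℂ) * z) / (u : ℂ)) = -Li2 z := by
    rw [Li2, neg_neg]
  calc Dfun z
      = ∫ u in (0:ℝ)..1, (2 * (Complex.log (1 - (u : ℂ) * z) / (u : ℂ)) -
          (Complex.log (1 - (u : ℂ) * z) / (u : ℂ) -
            z * Complex.log ((u : ℂ) * z) / (1 - (u : ℂ) * z))) := by
        rw [Dfun]; exact intervalIntegral.integral_congr (fun u _ => e1 u)
    _ = (∫ u in (0:ℝ)..1, 2 * (Complex.log (1 - (u : ℂ) * z) / (u : ℂ))) -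
        ∫ u in (0:ℝ)..1, (Complex.log (1 - (u : ℂ) * z) / (u : ℂ) -
          z * Complex.log ((u : ℂ) * z) / (1 - (u : ℂ) * z)) :=
        integral_sub (hI_f.const_mul 2) (hI_f.sub hI_q)
    _ = 2 * (-Li2 z) - Complex.log z * Complex.log (1 - z) := by
        rw [intervalIntegral.integral_const_mul, hFTC, hint]
    _ = -2 * Li2 z - Complex.log z * Complex.log (1 - z) := by ring


lemma wedgeTensor_tmul (x y : ℂ) : wedgeTensor (x ⊗ₜ[ℚ] y) = wedge x y := rfl

lemma wedge_self (x : ℂ) : wedge x x = 0 := by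
  apply Subtype.ext
  have h := (ExteriorAlgebra.ιMulti ℚ 2 (M := ℂ)).map_eq_zero_of_eq ![x, x]
    (i := 0) (j := 1) rfl (by decide)
  simpa [wedge] using h

lemma wedge_add_left (x x' y : ℂ) : wedge (x + x') y = wedge x y + wedge x' y :=
  wedgeBil.map_add₂ x x' y

lemma wedge_add_right (x y y' : ℂ) : wedge x (y + y') = wedge x y + wedge x y' :=
  (wedgeBil x).map_add y y'

lemma wedge_sub_right (x y y' : ℂ) : wedge x (y - y') = wedge x y - wedge x y' :=
  (wedgeBil x).map_sub y y'

lemma wedge_neg_left (x y : ℂ) : wedge (-x) y = -wedge x y :=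
  wedgeBil.map_neg₂ x y

lemma wedge_antisymm (x y : ℂ) : wedge y x = -wedge x y := by
  have h2 : wedge x y + wedge y x = 0 := by
    have h := wedge_self (x + y)
    rwa [wedge_add_left, wedge_add_right, wedge_add_right, wedge_self, wedge_self,
      zero_add, add_zero] at h
  exact eq_neg_of_add_eq_zero_right h2


/-- The skew-symmetric period of the second polylogarithm Hodge–Tate structure
`𝒫⁽²⁾(z)` equals the Bloch regulator `ρ̃(z)`. -/
theorem skew_symmetric_period_eq_bloch_regulator (z : ℂ)
    (hz : z ∉ Complex.ofReal '' (Set.Iic 0 ∪ Set.Ici 1)) :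
    letI τ : ℂ := 2 * Real.pi * Complex.I
    letI M : Matrix (Fin 3) (Fin 3) ℂ :=
      !![1, Complex.log (1 - z), -Li2 z; 0, τ, τ * Complex.log z; 0, 0, τ ^ 2]
    wedgeTensor (∑ k : Fin 3, (M⁻¹ 0 k) ⊗ₜ[ℚ] ((τ ^ 2)⁻¹ * M k 2)) =
      wedge (Complex.log z / τ) (Complex.log (1 - z) / τ) + wedge 1 (Dfun z / τ ^ 2) := by
  have hc := cases_of_hz hz
  set τ : ℂ := 2 * Real.pi * Complex.I with hτdef
  set M : Matrix (Fin 3) (Fin 3) ℂ :=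
    !![1, Complex.log (1 - z), -Li2 z; 0, τ, τ * Complex.log z; 0, 0, τ ^ 2] with hMdef
  have hτ : τ ≠ 0 := by
    rw [hτdef]
    exact mul_ne_zero (mul_ne_zero two_ne_zero
      (Complex.ofReal_ne_zero.mpr Real.pi_ne_zero)) Complex.I_ne_zero
  have hτ2 : τ ^ 2 ≠ 0 := pow_ne_zero 2 hτ
  have hMinv : M⁻¹ = !![1, -Complex.log (1 - z)/τ,
      (Complex.log (1 - z) * Complex.log z + Li2 z)/τ^2;
      0, τ⁻¹, -Complex.log z/τ^2; 0, 0, (τ^2)⁻¹] := by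
    apply Matrix.inv_eq_right_inv
    ext i j
    fin_cases i <;> fin_cases j <;>
      simp [hMdef, Matrix.mul_apply, Fin.sum_univ_three, Matrix.one_apply,
        Matrix.vecHead, Matrix.vecTail] <;>
      field_simp <;> ring
  rw [Fin.sum_univ_three, hMinv]
  have hsum : (!![1, -Complex.log (1 - z)/τ,
      (Complex.log (1 - z) * Complex.log z + Li2 z)/τ^2;
      0, τ⁻¹, -Complex.log z/τ^2; 0, 0, (τ^2)⁻¹] : Matrix (Fin 3) (Fin 3) ℂ) 0 0 ⊗ₜ[ℚ]
        ((τ ^ 2)⁻¹ * M 0 2)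
      + (!![1, -Complex.log (1 - z)/τ,
      (Complex.log (1 - z) * Complex.log z + Li2 z)/τ^2;
      0, τ⁻¹, -Complex.log z/τ^2; 0, 0, (τ^2)⁻¹] : Matrix (Fin 3) (Fin 3) ℂ) 0 1 ⊗ₜ[ℚ]
        ((τ ^ 2)⁻¹ * M 1 2)
      + (!![1, -Complex.log (1 - z)/τ,
      (Complex.log (1 - z) * Complex.log z + Li2 z)/τ^2;
      0, τ⁻¹, -Complex.log z/τ^2; 0, 0, (τ^2)⁻¹] : Matrix (Fin 3) (Fin 3) ℂ) 0 2 ⊗ₜ[ℚ]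
        ((τ ^ 2)⁻¹ * M 2 2)
      = (1 : ℂ) ⊗ₜ[ℚ] ((τ ^ 2)⁻¹ * (-Li2 z))
      + (-Complex.log (1 - z)/τ) ⊗ₜ[ℚ] ((τ ^ 2)⁻¹ * (τ * Complex.log z))
      + ((Complex.log (1 - z) * Complex.log z + Li2 z)/τ^2) ⊗ₜ[ℚ] ((τ ^ 2)⁻¹ * τ^2) := by
    simp [hMdef]
  rw [hsum, map_add, map_add, wedgeTensor_tmul, wedgeTensor_tmul, wedgeTensor_tmul]
  rw [show (τ ^ 2)⁻¹ * (τ * Complex.log z) = Complex.log z / τ by field_simp]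
  rw [show (τ ^ 2)⁻¹ * τ ^ 2 = 1 from inv_mul_cancel₀ hτ2]
  rw [show (-Complex.log (1 - z)/τ : ℂ) = -(Complex.log (1 - z)/τ) by ring]
  rw [wedge_neg_left, ← wedge_antisymm]
  rw [show wedge ((Complex.log (1 - z) * Complex.log z + Li2 z)/τ^2) 1
      = -wedge 1 ((Complex.log (1 - z) * Complex.log z + Li2 z)/τ^2) from wedge_antisymm _ _]
  have hD : Dfun z / τ ^ 2 = (τ ^ 2)⁻¹ * (-Li2 z)
      - (Complex.log (1 - z) * Complex.log z + Li2 z)/τ^2 := by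
    rw [Dfun_eq hz]
    field_simp
    ring
  rw [show wedge 1 (Dfun z / τ ^ 2)
      = wedge 1 ((τ ^ 2)⁻¹ * (-Li2 z)) - wedge 1 ((Complex.log (1 - z) * Complex.log z + Li2 z)/τ^2)
      by rw [hD, wedge_sub_right]]
  abel


end
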